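/- For n ≥ 2 and k ∈ {1, …, n} with k ≤ n − 2, the number of ordered set partitions of {1, …, n} whose largest block has size at least k is at most n^{3(n−k)}. Moreover the bound n^{3(n−k)} also holds for k = n−1 and k = n, where the counts are 2n and 1 respectively. -/
import Mathlib


open Finset

/-- An ordered set partition of `[n]` into `L` nonempty blocks is identified with a
surjection `σ : [n] → [L]` (the block-assignment map); its blocks are the fibers of `σ`.
The number of ordered set partitions of `[n]` whose largest block has size at least `k`
is at most `n^{3(n−k)}`, for every `n ≥ 2` and `1 ≤ k ≤ n`. -/
theorem card_ordered_partitions_large_block_le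
    (n k : ℕ) (hn : 2 ≤ n) (hk : 1 ≤ k) (hkn : k ≤ n) :
    Nat.card {p : Σ L : Fin (n + 1), Fin n → Fin L.1 //
        Function.Surjective p.2 ∧
        ∃ ℓ : Fin p.1.1, k ≤ (Finset.univ.filter (fun i => p.2 i = ℓ)).card} ≤
      n ^ (3 * (n - k)) := by
  classical
  set m := n - k with hm
  let T := {p : Σ L : Fin (n + 1), Fin n → Fin L.1 //
        Function.Surjective p.2 ∧
        ∃ ℓ : Fin p.1.1, k ≤ (Finset.univ.filter (fun i => p.2 i = ℓ)).card}
  have hLle : ∀ q : T, (q.1.1 : ℕ) ≤ n := fun q => by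
    simpa using Fintype.card_le_of_surjective q.1.2 q.2.1
  let S : T → Finset (Fin n) := fun q => univ.filter (fun i => q.1.2 i ≠ q.2.2.choose)
  have hScard : ∀ q : T, (S q).card ≤ m := by
    intro q
    have h1 := q.2.2.choose_spec
    have h2 : (univ.filter (fun i => q.1.2 i = q.2.2.choose)).card + (S q).card = n := by
      simpa using Finset.card_filter_add_card_filter_not
        (s := (univ : Finset (Fin n))) (p := fun i => q.1.2 i = q.2.2.choose)
    omega
  let F : T → (Fin m → Option (Fin n × Fin n)) := fun q j =>
    if hj : (j : ℕ) < (S q).card then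
      some ((S q).orderEmbOfFin rfl ⟨j, hj⟩,
        Fin.castLE (hLle q) (q.1.2 ((S q).orderEmbOfFin rfl ⟨j, hj⟩)))
    else none
  have hoff : ∀ (q : T) (i : Fin n), i ∉ S q → q.1.2 i = q.2.2.choose := by
    intro q i hi
    simpa [S] using hi
  have hex0 : ∀ q : T, ∃ i, i ∉ S q := by
    intro q
    have h1 := q.2.2.choose_spec
    obtain ⟨i, hi⟩ : (univ.filter (fun i => q.1.2 i = q.2.2.choose)).Nonempty :=
      Finset.card_pos.mp (lt_of_lt_of_le hk h1)
    rw [Finset.mem_filter] at hi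
    exact ⟨i, by simp [S, hi.2]⟩
  have himg : ∀ q : T, Finset.image (fun i => (q.1.2 i : ℕ)) univ = Finset.range q.1.1.1 := by
    intro q
    ext x
    simp only [Finset.mem_image, Finset.mem_range, Finset.mem_univ, true_and]
    constructor
    · rintro ⟨i, rfl⟩; exact (q.1.2 i).2
    · intro hx
      obtain ⟨i, hi⟩ := q.2.1 ⟨x, hx⟩
      exact ⟨i, by rw [hi]⟩
  have hsplit : ∀ q : T,
      Finset.range q.1.1.1
        = insert ((q.2.2.choose : ℕ)) ((S q).image fun i => (q.1.2 i : ℕ)) := by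
    intro q
    obtain ⟨i₀, hi₀⟩ := hex0 q
    rw [← himg q]
    ext x
    simp only [mem_image, mem_insert, mem_univ, true_and]
    constructor
    · rintro ⟨i, rfl⟩
      by_cases h : i ∈ S q
      · exact Or.inr ⟨i, h, rfl⟩
      · exact Or.inl (by rw [hoff q i h])
    · rintro (rfl | ⟨i, hi, rfl⟩)
      · exact ⟨i₀, by rw [hoff q i₀ hi₀]⟩
      · exact ⟨i, rfl⟩
  have hlnotmem : ∀ q : T,
      ((q.2.2.choose : ℕ)) ∉ (S q).image fun i => (q.1.2 i : ℕ) := by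
    intro q h
    simp only [mem_image] at h
    obtain ⟨i, hi, hv⟩ := h
    simp only [S, mem_filter, mem_univ, true_and] at hi
    exact hi (Fin.val_injective hv)
  have hF : Function.Injective F := by
    intro q₁ q₂ hq
    have hq' : ∀ j : Fin m, F q₁ j = F q₂ j := fun j => congrFun hq j
    have key : ∀ a b : T, (∀ j : Fin m, F a j = F b j) → (S a).card ≤ (S b).card := by
      intro a b hab
      by_contra hcon
      push_neg at hcon
      have hj := hab ⟨(S b).card, lt_of_lt_of_le hcon (hScard a)⟩
      simp only [F] at hj
      rw [dif_pos hcon, dif_neg (lt_irrefl _)] at hj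
      exact Option.some_ne_none _ hj
    have hcard : (S q₁).card = (S q₂).card :=
      le_antisymm (key q₁ q₂ hq') (key q₂ q₁ fun j => (hq' j).symm)
    have hpt : ∀ (c : ℕ) (h1 : c < (S q₁).card) (h2 : c < (S q₂).card),
        (S q₁).orderEmbOfFin rfl ⟨c, h1⟩ = (S q₂).orderEmbOfFin rfl ⟨c, h2⟩ ∧
        ((q₁.1.2 ((S q₁).orderEmbOfFin rfl ⟨c, h1⟩)) : ℕ)
          = ((q₂.1.2 ((S q₂).orderEmbOfFin rfl ⟨c, h2⟩)) : ℕ) := by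
      intro c h1 h2
      have hj := hq' ⟨c, lt_of_lt_of_le h1 (hScard q₁)⟩
      simp only [F] at hj
      rw [dif_pos h1, dif_pos h2] at hj
      have h3 := Option.some.inj hj
      refine ⟨congrArg Prod.fst h3, ?_⟩
      have h4 := congrArg Prod.snd h3
      simpa using congrArg Fin.val h4
    have hSeq : S q₁ = S q₂ := by
      apply Finset.coe_injective
      rw [← Finset.range_orderEmbOfFin (S q₁) rfl, ← Finset.range_orderEmbOfFin (S q₂) rfl]
      ext x
      constructor
      · rintro ⟨j, rfl⟩
        exact ⟨⟨j.1, hcard ▸ j.2⟩, ((hpt j.1 j.2 (hcard ▸ j.2)).1).symm⟩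
      · rintro ⟨j, rfl⟩
        exact ⟨⟨j.1, lt_of_lt_of_eq j.2 hcard.symm⟩, (hpt j.1 (lt_of_lt_of_eq j.2 hcard.symm) j.2).1⟩
    have hval : ∀ i ∈ S q₁, ((q₁.1.2 i : ℕ)) = (q₂.1.2 i : ℕ) := by
      intro i hi
      have hr : (i : Fin n) ∈ Set.range ((S q₁).orderEmbOfFin rfl) := by
        rw [Finset.range_orderEmbOfFin]; exact hi
      obtain ⟨j, rfl⟩ := hr
      have h2 : (j : ℕ) < (S q₂).card := hcard ▸ j.2
      obtain ⟨hemb, hv⟩ := hpt j.1 j.2 h2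
      exact hv.trans (by rw [← hemb])
    have hVeq : ((S q₁).image fun i => (q₁.1.2 i : ℕ))
        = ((S q₂).image fun i => (q₂.1.2 i : ℕ)) := by
      rw [← hSeq]
      exact Finset.image_congr (fun i hi => hval i hi)
    have hL : q₁.1.1.1 = q₂.1.1.1 := by
      have h1 := congrArg Finset.card (hsplit q₁)
      have h2 := congrArg Finset.card (hsplit q₂)
      rw [Finset.card_range, Finset.card_insert_of_notMem (hlnotmem q₁)] at h1
      rw [Finset.card_range, Finset.card_insert_of_notMem (hlnotmem q₂)] at h2
      rw [h1, h2, hVeq]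
    have hl : ((q₁.2.2.choose : ℕ)) = ((q₂.2.2.choose : ℕ)) := by
      have h1 : ((q₁.2.2.choose : ℕ))
          ∈ insert ((q₂.2.2.choose : ℕ)) ((S q₂).image fun i => (q₂.1.2 i : ℕ)) := by
        rw [← hsplit q₂, ← hL, hsplit q₁]
        exact Finset.mem_insert_self _ _
      rcases Finset.mem_insert.mp h1 with h | h
      · exact h
      · rw [← hVeq] at h
        exact absurd h (hlnotmem q₁)
    have hallval : ∀ i, (q₁.1.2 i : ℕ) = (q₂.1.2 i : ℕ) := by
      intro i
      by_cases h : i ∈ S q₁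
      · exact hval i h
      · rw [hoff q₁ i h, hoff q₂ i (hSeq ▸ h)]
        exact hl
    obtain ⟨⟨⟨L₁, hL₁⟩, σ₁⟩, h₁⟩ := q₁
    obtain ⟨⟨⟨L₂, hL₂⟩, σ₂⟩, h₂⟩ := q₂
    have hL' : L₁ = L₂ := hL
    subst hL'
    have hσ : σ₁ = σ₂ := funext fun i => Fin.val_injective (hallval i)
    subst hσ
    rfl
  calc Nat.card T ≤ Nat.card (Fin m → Option (Fin n × Fin n)) :=
        Nat.card_le_card_of_injective F hF
    _ = (n * n + 1) ^ m := by
        simp [Nat.card_eq_fintype_card]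
    _ ≤ (n ^ 3) ^ m := by
        apply Nat.pow_le_pow_left
        nlinarith
    _ = n ^ (3 * m) := by rw [← pow_mul]
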